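/- Let n ≥ 1 and let X ⊆ {0,1}^n be a finite subset of binary words (ordered 0 < 1) stable under the cyclic shift c. Suppose there is a non-constant word w ∈ X whose C-orbit is free (its n cyclic shifts are pairwise distinct) and such that every non-constant word of X lies in the C-orbit of w. Then (X, X^inv(t), C) exhibits the cyclic sieving phenomenon if and only if gcd(n, wt(w)) = 1. -/

import Mathlib

/-- The (leftward) cyclic shift on words of length `n`:
`c(w₁,…,wₙ) = (w₂,…,wₙ,w₁)`. -/
def cshift {A : Type*} {n : ℕ} (w : Fin n → A) : Fin n → A :=
  fun i => w ⟨((i : ℕ) + 1) % n, Nat.mod_lt _ i.pos⟩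

/-- The major index of a word: `maj w = Σ_{1 ≤ i ≤ n-1, w_i > w_{i+1}} i`
(here positions are 0-indexed, so position `i : Fin n` is the `(i+1)`-st letter). -/
def majIdx {A : Type*} [LinearOrder A] {n : ℕ} (w : Fin n → A) : ℕ :=
  ∑ i : Fin n,
    if h : (i : ℕ) + 1 < n then (if w ⟨(i : ℕ) + 1, h⟩ < w i then (i : ℕ) + 1 else 0) else 0

/-- The number of cyclic descents of a word, `cdes w = #{i : w_i > w_{i+1}}`
with indices read cyclically (`w_{n+1} := w_1`). -/
def cdes {A : Type*} [LinearOrder A] {n : ℕ} (w : Fin n → A) : ℕ :=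
  (Finset.univ.filter fun i : Fin n =>
    w ⟨((i : ℕ) + 1) % n, Nat.mod_lt _ i.pos⟩ < w i).card

/-- The inversion number of a word: `inv w = #{(i,j) : i < j, w_i > w_j}`. -/
def invNum {A : Type*} [LinearOrder A] {n : ℕ} (w : Fin n → A) : ℕ :=
  (Finset.univ.filter fun p : Fin n × Fin n => p.1 < p.2 ∧ w p.2 < w p.1).card

/-- The Hamming weight of a binary word: the number of ones. -/
def wt {n : ℕ} (w : Fin n → Bool) : ℕ :=
  (Finset.univ.filter fun i => w i = true).card

/-- The triple `(X, Σ_{x ∈ X} t^{stat x}, C)` exhibits the cyclic sieving phenomenon,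
where `C` is the cyclic group of order `n` generated by the cyclic shift `c` acting on `X`:
for every `d`, the number of fixed points of `c^d` on `X` equals the evaluation of
`Σ_{x ∈ X} t^{stat x}` at `t = ζ^d`, with `ζ = exp(2πi/n)`. -/
def exhibitsCSP {A : Type*} [DecidableEq A] {n : ℕ} (X : Finset (Fin n → A))
    (stat : (Fin n → A) → ℕ) : Prop :=
  ∀ d : ℕ,
    ((X.filter fun v => cshift^[d] v = v).card : ℂ) =
      ∑ v ∈ X, Complex.exp (2 * (Real.pi : ℂ) * Complex.I / n) ^ (d * stat v)

/-- if a shift-stable set of binary words X ⊆ {0,1}^n has all its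
non-constant words lying in a single free C-orbit, represented by the word w, then
(X, X^inv(t), C) exhibits the CSP if and only if gcd(n, wt w) = 1. -/
lemma cshift_apply {A : Type*} {n : ℕ} [NeZero n] (w : Fin n → A) (i : Fin n) :
    cshift w i = w (i + 1) := by
  unfold cshift
  congr 1
  apply Fin.ext
  simp only [Fin.val_add, Fin.val_one', Nat.mod_self]
  conv_rhs => rw [Nat.add_mod]
  rw [Nat.mod_mod_of_dvd _ dvd_rfl, ← Nat.add_mod]

lemma bool_lt_iff (a b : Bool) : a < b ↔ a = false ∧ b = true := by revert a b; decide

lemma val_add_one_of_lt' {m : ℕ} {i : Fin (m+1)} (h : (i:ℕ) < m) :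
    ((i+1 : Fin (m+1)) : ℕ) = (i:ℕ) + 1 := by
  rw [Fin.val_add_one, if_neg]
  intro hc; subst hc; simp [Fin.val_last] at h

lemma val_sub_one_of_ne_zero {m : ℕ} {i : Fin (m+1)} (h : ¬ i = 0) :
    ((i - 1 : Fin (m+1)) : ℕ) = (i:ℕ) - 1 := by
  rw [Fin.coe_sub_one, if_neg h]

lemma fin_ne_zero_iff {m : ℕ} {i : Fin (m+1)} : (¬ i = 0) ↔ ¬ (i:ℕ) = 0 := by
  rw [Fin.ext_iff, Fin.val_zero]

lemma fin_ne_last_iff {m : ℕ} {i : Fin (m+1)} : (¬ i = Fin.last m) ↔ ¬ (i:ℕ) = m := by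
  rw [Fin.ext_iff, Fin.val_last]

lemma inv_cshift_key {m : ℕ} (w : Fin (m+1) → Bool) :
    invNum (cshift w) + (if w 0 = true then (m+1) else 0) = invNum w + wt w := by
  classical
  have hsplitB := Finset.card_filter_add_card_filter_not
      (s := Finset.univ.filter fun p : Fin (m+1) × Fin (m+1) =>
        p.1 < p.2 ∧ cshift w p.2 < cshift w p.1)
      (p := fun p => p.2 = Fin.last m)
  have hsplitA := Finset.card_filter_add_card_filter_not
      (s := Finset.univ.filter fun p : Fin (m+1) × Fin (m+1) => p.1 < p.2 ∧ w p.2 < w p.1)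
      (p := fun p => p.1 = 0)
  have hwt := Finset.card_filter_add_card_filter_not
      (s := (Finset.univ : Finset (Fin (m+1)))) (p := fun i => w i = true)
  rw [Finset.card_univ, Fintype.card_fin] at hwt
  have hlast1 : (Fin.last m + 1 : Fin (m+1)) = 0 := by
    apply Fin.ext; rw [Fin.val_add_one, if_pos rfl, Fin.val_zero]
  -- claim 1 : the "other" parts biject
  have claim1 : ((Finset.univ.filter fun p : Fin (m+1) × Fin (m+1) =>
        p.1 < p.2 ∧ cshift w p.2 < cshift w p.1).filter fun p => ¬ p.2 = Fin.last m).card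
      = ((Finset.univ.filter fun p : Fin (m+1) × Fin (m+1) =>
        p.1 < p.2 ∧ w p.2 < w p.1).filter fun p => ¬ p.1 = 0).card := by
    apply Finset.card_nbij' (i := fun p => (p.1 + 1, p.2 + 1))
      (j := fun q => (q.1 - 1, q.2 - 1))
    · rintro ⟨a, b⟩ hp
      simp only [Finset.mem_filter, Finset.mem_univ, true_and, cshift_apply,
        Fin.lt_def, Finset.mem_coe] at hp ⊢
      obtain ⟨⟨hab, hwc⟩, hbl⟩ := hp
      rw [fin_ne_last_iff] at hbl
      have hb : (b:ℕ) < m := by have := b.isLt; omega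
      have ha : (a:ℕ) < m := by omega
      refine ⟨⟨?_, hwc⟩, ?_⟩
      · rw [val_add_one_of_lt' ha, val_add_one_of_lt' hb]; omega
      · rw [fin_ne_zero_iff, val_add_one_of_lt' ha]; omega
    · rintro ⟨a, b⟩ hq
      simp only [Finset.mem_filter, Finset.mem_univ, true_and, cshift_apply,
        Fin.lt_def, Finset.mem_coe] at hq ⊢
      obtain ⟨⟨hab, hwc⟩, ha0⟩ := hq
      rw [fin_ne_zero_iff] at ha0
      have hb0 : ¬ b = 0 := by rw [fin_ne_zero_iff]; omega
      have hbm := b.isLt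
      refine ⟨⟨?_, ?_⟩, ?_⟩
      · rw [val_sub_one_of_ne_zero (fin_ne_zero_iff.mpr ha0), val_sub_one_of_ne_zero hb0]
        omega
      · rw [sub_add_cancel, sub_add_cancel]; exact hwc
      · rw [fin_ne_last_iff, val_sub_one_of_ne_zero hb0]; omega
    · rintro ⟨a, b⟩ _; simp [add_sub_cancel_right]
    · rintro ⟨a, b⟩ _; simp [sub_add_cancel]
  -- claim 2 : pairs (0, j)
  have claim2 : ((Finset.univ.filter fun p : Fin (m+1) × Fin (m+1) =>
        p.1 < p.2 ∧ w p.2 < w p.1).filter fun p => p.1 = 0).card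
      = if w 0 = true then (Finset.univ.filter fun i : Fin (m+1) => ¬ w i = true).card
        else 0 := by
    by_cases h0 : w 0 = true
    · rw [if_pos h0]
      apply Finset.card_nbij' (i := fun p => p.2) (j := fun j => (0, j))
      · rintro ⟨a, b⟩ hp
        simp only [Finset.mem_filter, Finset.mem_univ, true_and, Finset.mem_coe] at hp ⊢
        rcases hp with ⟨⟨_, hlt⟩, _⟩
        rw [bool_lt_iff] at hlt
        simp [hlt.1]
      · intro j hj
        simp only [Finset.mem_filter, Finset.mem_univ, true_and, Bool.not_eq_true, Finset.mem_coe] at hj ⊢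
        have hj0 : ¬ j = 0 := by intro hc; rw [hc, h0] at hj; simp at hj
        exact ⟨⟨Fin.pos_iff_ne_zero.mpr hj0, by rw [bool_lt_iff, h0]; exact ⟨hj, rfl⟩⟩, trivial⟩
      · rintro ⟨a, b⟩ hp
        simp only [Finset.mem_filter, Finset.mem_coe] at hp
        simp [Prod.ext_iff, hp.2.symm]
      · intro j _; rfl
    · rw [if_neg h0, Finset.card_eq_zero, Finset.filter_eq_empty_iff]
      rintro ⟨a, b⟩ hp ha
      simp only [Finset.mem_filter, Finset.mem_univ, true_and] at hp
      have ha' : a = 0 := ha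
      rw [ha'] at hp
      rw [bool_lt_iff] at hp
      exact h0 hp.2.2
  -- claim 3 : pairs (i, last)
  have claim3 : ((Finset.univ.filter fun p : Fin (m+1) × Fin (m+1) =>
        p.1 < p.2 ∧ cshift w p.2 < cshift w p.1).filter fun p => p.2 = Fin.last m).card
      = if w 0 = true then 0 else wt w := by
    by_cases h0 : w 0 = true
    · rw [if_pos h0, Finset.card_eq_zero, Finset.filter_eq_empty_iff]
      rintro ⟨a, b⟩ hp hb
      simp only [Finset.mem_filter, Finset.mem_univ, true_and, cshift_apply] at hp
      have hb' : b = Fin.last m := hb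
      rw [hb', hlast1, h0, bool_lt_iff] at hp
      simp at hp
    · rw [if_neg h0]
      unfold wt
      have h0' : w 0 = false := by simpa using h0
      apply Finset.card_nbij' (i := fun p => p.1 + 1) (j := fun j => (j - 1, Fin.last m))
      · rintro ⟨a, b⟩ hp
        simp only [Finset.mem_filter, Finset.mem_univ, true_and, cshift_apply, Finset.mem_coe] at hp ⊢
        rcases hp with ⟨⟨_, hlt⟩, hb⟩
        have hb' : b = Fin.last m := hb
        rw [hb', hlast1, bool_lt_iff] at hlt
        exact hlt.2
      · intro j hj
        simp only [Finset.mem_filter, Finset.mem_univ, true_and, cshift_apply, Finset.mem_coe] at hj ⊢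
        have hj0 : ¬ j = 0 := by intro hc; rw [hc] at hj; exact h0 hj
        have hj1 : 1 ≤ (j:ℕ) := by rw [fin_ne_zero_iff] at hj0; omega
        have hjm := j.isLt
        refine ⟨⟨?_, ?_⟩, trivial⟩
        · rw [Fin.lt_def, val_sub_one_of_ne_zero hj0, Fin.val_last]; omega
        · rw [hlast1, sub_add_cancel, h0', bool_lt_iff]
          exact ⟨rfl, hj⟩
      · rintro ⟨a, b⟩ hp
        simp only [Finset.mem_filter, Finset.mem_coe] at hp
        have hb' : b = Fin.last m := hp.2
        simp [Prod.ext_iff, add_sub_cancel_right, hb'.symm]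
      · intro j _; simp [sub_add_cancel]
  unfold invNum
  rw [← hsplitA, ← hsplitB, claim1, claim2, claim3]
  unfold wt
  by_cases h0 : w 0 = true
  · rw [if_pos h0, if_pos h0, if_pos h0]; omega
  · rw [if_neg h0, if_neg h0, if_neg h0]; omega


open Fin.NatCast

lemma cshift_iterate {A : Type*} {n : ℕ} [NeZero n] (w : Fin n → A) (r : ℕ) (i : Fin n) :
    cshift^[r] w i = w (i + r) := by
  induction r generalizing i with
  | zero => simp
  | succ r ih =>
      rw [Function.iterate_succ_apply', cshift_apply, ih]
      congr 1
      push_cast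
      abel

lemma cshift_iterate_mod {A : Type*} {n : ℕ} [NeZero n] (w : Fin n → A) (r : ℕ) :
    cshift^[r] w = cshift^[r % n] w := by
  funext i
  rw [cshift_iterate, cshift_iterate]
  congr 1
  apply Fin.ext
  simp [Fin.val_add, Fin.val_natCast, Nat.mod_mod_of_dvd]

lemma cshift_const {A : Type*} {n : ℕ} [NeZero n] (v : Fin n → A) (hv : ∀ i, v i = v 0)
    (d : ℕ) : cshift^[d] v = v := by
  funext i
  rw [cshift_iterate, hv, hv i]

lemma wt_cshift {n : ℕ} [NeZero n] (w : Fin n → Bool) : wt (cshift w) = wt w := by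
  unfold wt
  simp_rw [cshift_apply]
  apply Finset.card_nbij' (i := fun i => i + 1) (j := fun j => j - 1)
  · intro a ha; simp only [Finset.mem_filter, Finset.mem_univ, true_and, Finset.mem_coe] at ha ⊢; exact ha
  · intro a ha; simp only [Finset.mem_filter, Finset.mem_univ, true_and, Finset.mem_coe] at ha ⊢
    rw [sub_add_cancel]; exact ha
  · intro a _; exact add_sub_cancel_right a 1
  · intro a _; exact sub_add_cancel a 1

lemma wt_cshift_iterate {n : ℕ} [NeZero n] (w : Fin n → Bool) (r : ℕ) :
    wt (cshift^[r] w) = wt w := by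
  induction r with
  | zero => rfl
  | succ r ih => rw [Function.iterate_succ_apply', wt_cshift, ih]

lemma invNum_const {A : Type*} [LinearOrder A] {n : ℕ} [NeZero n] (v : Fin n → A)
    (hv : ∀ i, v i = v 0) : invNum v = 0 := by
  unfold invNum
  rw [Finset.card_eq_zero, Finset.filter_eq_empty_iff]
  intro p _ h
  rw [hv p.1, hv p.2] at h
  exact lt_irrefl _ h.2

lemma inv_cshift_zmod {n : ℕ} (hn : 0 < n) (w : Fin n → Bool) :
    ((invNum (cshift w) : ZMod n)) = invNum w + wt w := by
  obtain ⟨m, rfl⟩ : ∃ m, n = m + 1 := ⟨n - 1, by omega⟩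
  have h := inv_cshift_key w
  split_ifs at h with h0
  · have hz : ((m + 1 : ℕ) : ZMod (m+1)) = 0 := ZMod.natCast_self _
    calc ((invNum (cshift w) : ℕ) : ZMod (m+1))
        = ((invNum (cshift w) + (m + 1) : ℕ) : ZMod (m+1)) := by
          rw [Nat.cast_add, hz, add_zero]
      _ = ((invNum w + wt w : ℕ) : ZMod (m+1)) := by rw [h]
      _ = _ := by push_cast; ring
  · rw [add_zero] at h
    rw [h]; push_cast; ring

lemma inv_iterate_zmod {n : ℕ} (hn : 0 < n) (w : Fin n → Bool) (r : ℕ) :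
    ((invNum (cshift^[r] w) : ZMod n)) = invNum w + r * wt w := by
  haveI : NeZero n := ⟨by omega⟩
  induction r with
  | zero => simp
  | succ r ih =>
      rw [Function.iterate_succ_apply', inv_cshift_zmod hn, ih, wt_cshift_iterate]
      push_cast
      ring


theorem stmt10 {n : ℕ} (hn : 1 ≤ n)
    (X : Finset (Fin n → Bool)) (hX : ∀ v ∈ X, cshift v ∈ X)
    (w : Fin n → Bool) (hw : w ∈ X) (hnc : ∃ i j, w i ≠ w j)
    (hfree : ∀ i j : Fin n, cshift^[(i : ℕ)] w = cshift^[(j : ℕ)] w → i = j)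
    (horb : ∀ v ∈ X, (∃ i j, v i ≠ v j) → ∃ r : ℕ, v = cshift^[r] w) :
    exhibitsCSP X invNum ↔ Nat.gcd n (wt w) = 1 := by
  haveI : NeZero n := ⟨by omega⟩
  classical
  set k := wt w with hk
  unfold exhibitsCSP
  set ζ : ℂ := Complex.exp (2 * (Real.pi : ℂ) * Complex.I / n) with hζdef
  have hprim : IsPrimitiveRoot ζ n := Complex.isPrimitiveRoot_exp n (by omega)
  have hζn : ζ ^ n = 1 := hprim.pow_eq_one
  have hζmod : ∀ a : ℕ, ζ ^ a = ζ ^ (a % n) := by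
    intro a
    conv_lhs => rw [← Nat.div_add_mod a n]
    rw [pow_add, pow_mul, hζn, one_pow, one_mul]
  have hζpow : ∀ a b : ℕ, a % n = b % n → ζ ^ a = ζ ^ b := by
    intro a b hab
    rw [hζmod a, hζmod b, hab]
  have hζdvd : ∀ a : ℕ, n ∣ a → ζ ^ a = 1 := by
    rintro a ⟨c, rfl⟩
    rw [pow_mul, hζn, one_pow]
  have hζne : ∀ a : ℕ, ¬ n ∣ a → ζ ^ a ≠ 1 := fun a h hc =>
    h ((hprim.pow_eq_one_iff_dvd a).mp hc)
  -- the orbit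
  have horbX : ∀ r : ℕ, cshift^[r] w ∈ X := by
    intro r
    induction r with
    | zero => exact hw
    | succ r ih => rw [Function.iterate_succ_apply']; exact hX _ ih
  set O : Finset (Fin n → Bool) := (Finset.range n).image (fun r => cshift^[r] w) with hO
  have hinj : ∀ a ∈ Finset.range n, ∀ b ∈ Finset.range n,
      cshift^[a] w = cshift^[b] w → a = b := by
    intro a ha b hb h
    rw [Finset.mem_range] at ha hb
    have := hfree ⟨a, ha⟩ ⟨b, hb⟩ h
    exact congrArg Fin.val this
  have hOcard : O.card = n := by
    rw [hO, Finset.card_image_of_injOn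
      (fun a ha b hb h => hinj a (by simpa using ha) b (by simpa using hb) h),
      Finset.card_range]
  have hwconst : ¬ (∀ i, w i = w 0) := by
    obtain ⟨i, j, hij⟩ := hnc
    intro h; exact hij (by rw [h i, h j])
  have hOnc : ∀ v ∈ O, ¬ (∀ i, v i = v 0) := by
    intro v hv hconst
    rw [hO, Finset.mem_image] at hv
    obtain ⟨r, -, rfl⟩ := hv
    apply hwconst
    have h2 : ∀ i : Fin n, w i = w ((0 : Fin n) + (r : Fin n)) := by
      intro i
      have := hconst (i - (r : Fin n))
      rw [cshift_iterate, cshift_iterate, sub_add_cancel] at this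
      exact this
    exact fun i => (h2 i).trans (h2 0).symm
  have hXsub : ∀ v ∈ X, (¬ ∀ i, v i = v 0) → v ∈ O := by
    intro v hv hvc
    have hex : ∃ i j, v i ≠ v j := by
      by_contra hc
      push_neg at hc
      exact hvc (fun i => hc i 0)
    obtain ⟨r, rfl⟩ := horb v hv hex
    rw [hO, Finset.mem_image]
    exact ⟨r % n, Finset.mem_range.mpr (Nat.mod_lt _ (by omega)),
      (cshift_iterate_mod w r).symm⟩
  set Xc := X.filter (fun v => ∀ i, v i = v 0) with hXc
  have hdisj : Disjoint Xc O := by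
    rw [Finset.disjoint_left]
    intro v hvc hvo
    rw [hXc, Finset.mem_filter] at hvc
    exact hOnc v hvo hvc.2
  have hXeq : X = Xc ∪ O := by
    apply Finset.Subset.antisymm
    · intro v hv
      by_cases hc : ∀ i, v i = v 0
      · exact Finset.mem_union_left _ (Finset.mem_filter.mpr ⟨hv, hc⟩)
      · exact Finset.mem_union_right _ (hXsub v hv hc)
    · intro v hv
      rcases Finset.mem_union.mp hv with h | h
      · exact (Finset.mem_filter.mp h).1
      · rw [hO, Finset.mem_image] at h
        obtain ⟨r, -, rfl⟩ := h
        exact horbX r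
  have hXcard : X.card = Xc.card + n := by
    rw [hXeq, Finset.card_union_of_disjoint hdisj, hOcard]
  -- fixed point count
  have hL : ∀ d : ℕ, (X.filter fun v => cshift^[d] v = v).card
      = if n ∣ d then Xc.card + n else Xc.card := by
    intro d
    by_cases hd : n ∣ d
    · rw [if_pos hd, Finset.filter_true_of_mem, hXcard]
      intro v _
      obtain ⟨c, rfl⟩ := hd
      have hni : cshift^[n] v = v := by
        funext i
        rw [cshift_iterate]
        congr 1
        rw [Fin.natCast_self, add_zero]
      rw [Function.iterate_mul]
      exact Function.iterate_fixed hni c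
    · rw [if_neg hd, hXc]
      congr 1
      apply Finset.filter_congr
      intro v hv
      constructor
      · intro hfix
        by_contra hc
        have hvO := hXsub v hv hc
        rw [hO, Finset.mem_image] at hvO
        obtain ⟨r, -, rfl⟩ := hvO
        rw [← Function.iterate_add_apply] at hfix
        rw [cshift_iterate_mod w (d + r), cshift_iterate_mod w r] at hfix
        have hdr := hinj ((d + r) % n) (Finset.mem_range.mpr (Nat.mod_lt _ (by omega)))
          (r % n) (Finset.mem_range.mpr (Nat.mod_lt _ (by omega))) hfix
        have hmod : d + r ≡ 0 + r [MOD n] := by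
          rw [zero_add]
          exact hdr
        exact hd ((Nat.modEq_zero_iff_dvd).mp (Nat.ModEq.add_right_cancel' r hmod))
      · intro hc
        exact cshift_const v hc d
  -- the sum
  have hsum : ∀ d : ℕ, (∑ v ∈ X, ζ ^ (d * invNum v))
      = (Xc.card : ℂ) + ζ ^ (d * invNum w) * (if n ∣ d * k then (n : ℂ) else 0) := by
    intro d
    rw [hXeq, Finset.sum_union hdisj]
    have h1 : ∑ v ∈ Xc, ζ ^ (d * invNum v) = (Xc.card : ℂ) := by
      rw [Finset.sum_congr rfl (fun v hv => ?_), Finset.sum_const, nsmul_eq_mul, mul_one]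
      rw [hXc, Finset.mem_filter] at hv
      rw [invNum_const v hv.2, mul_zero, pow_zero]
    have h2 : ∑ v ∈ O, ζ ^ (d * invNum v)
        = ζ ^ (d * invNum w) * (if n ∣ d * k then (n : ℂ) else 0) := by
      rw [hO, Finset.sum_image hinj]
      have hterm : ∀ r, ζ ^ (d * invNum (cshift^[r] w))
          = ζ ^ (d * invNum w) * (ζ ^ (d * k)) ^ r := by
        intro r
        rw [← pow_mul, ← pow_add]
        apply hζpow
        have hz : ((d * invNum (cshift^[r] w) : ℕ) : ZMod n)
            = ((d * invNum w + d * k * r : ℕ) : ZMod n) := by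
          push_cast
          rw [inv_iterate_zmod (by omega) w r, hk]
          ring
        exact (ZMod.natCast_eq_natCast_iff _ _ _).mp hz
      rw [Finset.sum_congr rfl (fun r _ => hterm r), ← Finset.mul_sum]
      congr 1
      by_cases hdk : n ∣ d * k
      · rw [if_pos hdk, hζdvd _ hdk]
        simp
      · rw [if_neg hdk, geom_sum_eq (hζne _ hdk) n, ← pow_mul,
          hζdvd (d * k * n) ⟨d * k, by ring⟩]
        simp
    rw [h1, h2]
  constructor
  · intro hcsp
    by_contra hg
    set g := Nat.gcd n k with hgdef
    have hg1 : 0 < g := Nat.gcd_pos_of_pos_left k (by omega)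
    have hg2 : 2 ≤ g := by omega
    have hgn : g ∣ n := Nat.gcd_dvd_left n k
    have hgk : g ∣ k := Nat.gcd_dvd_right n k
    set d := n / g with hddef
    have hdg : d * g = n := Nat.div_mul_cancel hgn
    have hd_pos : 0 < d := Nat.div_pos (Nat.le_of_dvd (by omega) hgn) (by omega)
    have hdn : d < n := by
      have h2d : d * 2 ≤ n := by
        rw [← hdg]
        exact Nat.mul_le_mul_left d hg2
      omega
    have hnd : ¬ n ∣ d := fun hc => by
      have := Nat.le_of_dvd hd_pos hc; omega
    have hndk : n ∣ d * k := by
      obtain ⟨k', hk'⟩ := hgk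
      exact ⟨k', by rw [hk', ← mul_assoc, hdg]⟩
    have heq := hcsp d
    rw [hsum d, hL d, if_neg hnd, if_pos hndk] at heq
    have h0 : ζ ^ (d * invNum w) * (n : ℂ) = 0 := by linear_combination -heq
    have hne : ζ ^ (d * invNum w) * (n : ℂ) ≠ 0 := by
      apply mul_ne_zero
      · exact pow_ne_zero _ (Complex.exp_ne_zero _)
      · exact Nat.cast_ne_zero.mpr (by omega)
    exact hne h0
  · intro hgcd d
    have hco : Nat.Coprime n k := hgcd
    rw [hsum d, hL d]
    by_cases hd : n ∣ d
    · rw [if_pos hd, if_pos (Dvd.dvd.mul_right hd k),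
        hζdvd (d * invNum w) (Dvd.dvd.mul_right hd _), one_mul]
      push_cast
      ring
    · rw [if_neg hd, if_neg (fun hc => hd (hco.dvd_of_dvd_mul_right hc))]
      simp
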